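/- Total reaction-rate integral from complete consumption of the reactant: let ν < 0, M > 0 and ṁ > 0. Suppose Y : [0,∞) → ℝ is C¹, p : [0,∞) → ℝ is continuous and positive with p·Y′ differentiable on (0,∞), ω : [0,∞) → ℝ is integrable, the species transport equation ṁ·Y′(x) − (p·Y′)′(x) = ν·M·ω(x) holds for all x > 0, the interface species balance ṁ = ṁ·Y(0) − p(0)·Y′(0) holds, and lim_{x→∞} Y(x) = 0 and lim_{x→∞} p(x)·Y′(x) = 0. Then ∫₀^∞ ω(x) dx = −ṁ/(M·ν), a positive quantity. -/

import Mathlib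

/-- Total reaction-rate integral from complete consumption of the reactant:
with `ν < 0` the stoichiometric coefficient, `M > 0` the molar mass and `ṁ > 0`
the mass flow rate, if the mass fraction `Y` is C¹ on `[0,∞)` (with derivative `Y'`),
`p = ρ·D_g` is continuous and positive with `p·Y'` differentiable on `(0,∞)`,
the reaction rate `ω` is integrable on `(0,∞)`, the species transport equation
`ṁ·Y' − (p·Y')' = ν·M·ω` holds on `(0,∞)`, the interface species balance
`ṁ = ṁ·Y(0) − p(0)·Y'(0)` holds, and `Y(x) → 0`, `p(x)·Y'(x) → 0` as `x → ∞`,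
then `∫₀^∞ ω = −ṁ/(M·ν)`, a positive quantity. -/
theorem reaction_rate_integral
    (ν M mdot : ℝ) (hν : ν < 0) (hM : 0 < M) (hmdot : 0 < mdot)
    (Y Y' p ω : ℝ → ℝ)
    (hY : ∀ x ∈ Set.Ici (0:ℝ), HasDerivWithinAt Y (Y' x) (Set.Ici 0) x)
    (hY'cont : ContinuousOn Y' (Set.Ici 0))
    (hpcont : ContinuousOn p (Set.Ici 0))
    (hppos : ∀ x ∈ Set.Ici (0:ℝ), 0 < p x)
    (hpYdiff : ∀ x ∈ Set.Ioi (0:ℝ), DifferentiableAt ℝ (fun y => p y * Y' y) x)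
    (hωint : MeasureTheory.IntegrableOn ω (Set.Ioi 0))
    (htransport : ∀ x ∈ Set.Ioi (0:ℝ),
      mdot * Y' x - deriv (fun y => p y * Y' y) x = ν * M * ω x)
    (hinterface : mdot = mdot * Y 0 - p 0 * Y' 0)
    (hYlim : Filter.Tendsto Y Filter.atTop (nhds 0))
    (hpYlim : Filter.Tendsto (fun x => p x * Y' x) Filter.atTop (nhds 0)) :
    (∫ x in Set.Ioi (0:ℝ), ω x) = -mdot / (M * ν) ∧ 0 < -mdot / (M * ν) := by
  set F : ℝ → ℝ := fun x => mdot * Y x - p x * Y' x with hF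
  have hYcont : ContinuousOn Y (Set.Ici 0) := fun x hx => (hY x hx).continuousWithinAt
  have hFcont : ContinuousOn F (Set.Ici 0) :=
    (continuousOn_const.mul hYcont).sub (hpcont.mul hY'cont)
  have hFderiv : ∀ x ∈ Set.Ioi (0:ℝ), HasDerivAt F (ν * M * ω x) x := by
    intro x hx
    have hxI : Set.Ici (0:ℝ) ∈ nhds x := Ici_mem_nhds hx
    have h1 : HasDerivAt Y (Y' x) x :=
      (hY x (Set.mem_Ici.mpr (le_of_lt hx))).hasDerivAt hxI
    have h2 : HasDerivAt (fun y => p y * Y' y) (deriv (fun y => p y * Y' y) x) x :=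
      (hpYdiff x hx).hasDerivAt
    have := (h1.const_mul mdot).sub h2
    rw [htransport x hx] at this
    exact this
  have hFlim : Filter.Tendsto F Filter.atTop (nhds 0) := by
    have := ((hYlim.const_mul mdot).sub hpYlim)
    simpa using this
  have hint : MeasureTheory.IntegrableOn (fun x => ν * M * ω x) (Set.Ioi 0) :=
    hωint.const_mul _
  have key : (∫ x in Set.Ioi (0:ℝ), ν * M * ω x) = 0 - F 0 :=
    MeasureTheory.integral_Ioi_of_hasDerivAt_of_tendsto
      (hFcont.continuousWithinAt (by simp)) hFderiv hint hFlim
  have hF0 : F 0 = mdot := hinterface.symm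
  rw [MeasureTheory.integral_const_mul, hF0] at key
  have hMν : M * ν < 0 := mul_neg_of_pos_of_neg hM hν
  refine ⟨?_, div_pos_of_neg_of_neg (by linarith) hMν⟩
  rw [eq_div_iff hMν.ne]
  linear_combination key
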